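/- Let A be an algebra, n ≥ 2, d a left Leibniz-derivation of order n of A, and I a subspace of A that is an ideal for the n-ary left-normed product (i.e., [A,...,I,...,A]_{l(n)} ⊆ I in each argument). Then for every k ≥ 1, d(I)^{(k)_n} ⊆ I + d^{n^k}(I^{(k)_n}), where B^{(1)_n} = [B,...,B]_{l(n)} and B^{(t+1)_n} = [B^{(t)_n},...,B^{(t)_n}]_{l(n)}. -/

import Mathlib

/-- Left-normed product `((...(x₁x₂)...)x_{n-1})x_n` (junk value `0` for `n = 0`). -/
def lnProd {A : Type*} [Mul A] [Zero A] : ∀ {n : ℕ}, (Fin n → A) → A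
  | 0, _ => 0
  | _ + 1, x => (List.ofFn fun i => x i.succ).foldl (· * ·) (x 0)

/-- `d` is a left Leibniz-derivation of order `n`. -/
def IsLeftLeibnizDer (F : Type*) {A : Type*} [Field F] [NonUnitalNonAssocRing A]
    [Module F A] (n : ℕ) (d : A →ₗ[F] A) : Prop :=
  ∀ x : Fin n → A, d (lnProd x) = ∑ i, lnProd (Function.update x i (d (x i)))

/-- Arrangements of brackets on a product of `n` factors. -/
inductive BTree : ℕ → Type
  | leaf : BTree 1
  | node : ∀ {m k : ℕ}, BTree m → BTree k → BTree (m + k)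

/-- The product of `x 0, ..., x (n-1)` with the arrangement of brackets `t`. -/
def BTree.eval {A : Type*} [Mul A] : ∀ {n : ℕ}, BTree n → (Fin n → A) → A
  | _, .leaf, x => x 0
  | _, .node (m := m) (k := k) t u, x =>
      (BTree.eval t fun i => x (Fin.castAdd k i)) * (BTree.eval u fun j => x (Fin.natAdd m j))

/-- `d` is an `f`-Leibniz-derivation for the arrangement of brackets `t`. -/
def IsLeibnizDerWrt (F : Type*) {A : Type*} [Field F] [NonUnitalNonAssocRing A]
    [Module F A] {n : ℕ} (t : BTree n) (d : A →ₗ[F] A) : Prop :=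
  ∀ x : Fin n → A, d (t.eval x) = ∑ i, t.eval (Function.update x i (d (x i)))

/-- The product of two submodules of a (nonassociative, nonunital) algebra:
the span of all products `s * t`, `s ∈ S`, `t ∈ T`. -/
def subMul (F : Type*) {A : Type*} [Field F] [NonUnitalNonAssocRing A] [Module F A]
    (S T : Submodule F A) : Submodule F A :=
  Submodule.span F {z | ∃ s ∈ S, ∃ t ∈ T, z = s * t}

/-- `algPow F S k` is the power `S^(k+1)`, where `S^1 = S` and
`S^n = Σ_{i=1}^{n-1} S^i S^(n-i)`. -/
def algPow (F : Type*) {A : Type*} [Field F] [NonUnitalNonAssocRing A] [Module F A]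
    (S : Submodule F A) : ℕ → Submodule F A
  | 0 => S
  | n + 1 => ⨆ i : Fin (n + 1), subMul F (algPow F S i) (algPow F S (n - (i : ℕ)))
  termination_by k => k
  decreasing_by all_goals omega

/-- `rpow F S k` is the right power `S^<k+1>`: `S^<1> = S`, `S^<n> = S^<n-1> S`. -/
def rpow (F : Type*) {A : Type*} [Field F] [NonUnitalNonAssocRing A] [Module F A]
    (S : Submodule F A) : ℕ → Submodule F A
  | 0 => S
  | n + 1 => subMul F (rpow F S n) S

/-- The span of all left-normed `n`-ary products of elements of `S`. -/
def nProd (F : Type*) {A : Type*} [Field F] [NonUnitalNonAssocRing A] [Module F A]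
    (n : ℕ) (S : Submodule F A) : Submodule F A :=
  Submodule.span F {z | ∃ x : Fin n → A, (∀ i, x i ∈ S) ∧ z = lnProd x}

/-- The `n`-ary derived series: `derivedN F n S k = S^{(k)ₙ}` (with `S^{(0)ₙ} = S`). -/
def derivedN (F : Type*) {A : Type*} [Field F] [NonUnitalNonAssocRing A] [Module F A]
    (n : ℕ) (S : Submodule F A) : ℕ → Submodule F A
  | 0 => S
  | k + 1 => nProd F n (derivedN F n S k)

section Aux
variable {A : Type*} [Mul A] [Zero A]

lemma lnProd_one (x : Fin 1 → A) : lnProd x = x 0 := by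
  simp [lnProd]

lemma lnProd_succ {n : ℕ} (x : Fin (n + 2) → A) :
    lnProd x = lnProd (fun i : Fin (n + 1) => x i.castSucc) * x (Fin.last (n + 1)) := by
  show (List.ofFn fun i : Fin (n+1) => x i.succ).foldl (· * ·) (x 0) = _
  rw [List.ofFn_succ' (fun i : Fin (n+1) => x i.succ), List.concat_eq_append,
    List.foldl_concat]
  congr 1

end Aux

section SlotSub
variable {A : Type*} [NonUnitalNonAssocRing A]

lemma lnProd_update_sub : ∀ {n : ℕ} (x : Fin n → A) (j : Fin n) (a b : A),
    lnProd (Function.update x j (a - b)) =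
      lnProd (Function.update x j a) - lnProd (Function.update x j b) := by
  intro n
  induction n with
  | zero => exact fun x j => j.elim0
  | succ n ih =>
    intro x j a b
    match n with
    | 0 =>
      have hj : j = 0 := Fin.ext (by omega)
      subst hj
      simp [lnProd_one]
    | m + 1 =>
      induction j using Fin.lastCases with
      | last =>
        have hcomp : ∀ c : A, (fun i : Fin (m+1) =>
            Function.update x (Fin.last (m+1)) c i.castSucc) = fun i => x i.castSucc := by
          intro c; funext i
          rw [Function.update_of_ne (Fin.castSucc_lt_last i).ne]
        simp only [lnProd_succ, hcomp, Function.update_self, mul_sub]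
      | cast j =>
        have hlast : ∀ c : A, Function.update x j.castSucc c (Fin.last (m+1)) = x (Fin.last (m+1)) := by
          intro c; rw [Function.update_of_ne (Fin.castSucc_lt_last j).ne']
        have hcomp : ∀ c : A, (fun i : Fin (m+1) =>
            Function.update x j.castSucc c i.castSucc) =
            Function.update (fun i : Fin (m+1) => x i.castSucc) j c := by
          intro c; funext i
          rcases eq_or_ne i j with rfl | h
          · simp
          · rw [Function.update_of_ne (fun hc => h (Fin.castSucc_injective _ hc)),
              Function.update_of_ne h]
        simp only [lnProd_succ, hcomp, hlast, ih, sub_mul]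

end SlotSub

section Main
variable {F A : Type*} [Field F] [NonUnitalNonAssocRing A] [Module F A]

lemma lnProd_sub_mem {n : ℕ} (I : Submodule F A)
    (hI : ∀ (x : Fin n → A) (i : Fin n), x i ∈ I → lnProd x ∈ I)
    (x v : Fin n → A) (h : ∀ i, x i - v i ∈ I) : lnProd x - lnProd v ∈ I := by
  have key : ∀ j : ℕ, j ≤ n →
      lnProd (fun i : Fin n => if (i : ℕ) < j then x i else v i) - lnProd v ∈ I := by
    intro j
    induction j with
    | zero =>
      intro _
      have : (fun i : Fin n => if (i : ℕ) < 0 then x i else v i) = v := by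
        funext i; simp
      rw [this, sub_self]; exact I.zero_mem
    | succ j ih =>
      intro hj
      have hjn : j < n := by omega
      set jf : Fin n := ⟨j, hjn⟩ with hjf
      set g : Fin n → A := fun i : Fin n => if (i : ℕ) < j then x i else v i with hg
      have h1 : (fun i : Fin n => if (i : ℕ) < j + 1 then x i else v i)
          = Function.update g jf (x jf) := by
        funext i
        rcases eq_or_ne i jf with rfl | hne
        · simp [hg, hjf]
        · rw [Function.update_of_ne hne, hg]
          have : (i : ℕ) ≠ j := fun hc => hne (Fin.ext hc)
          simp only []
          by_cases hlt : (i : ℕ) < j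
          · rw [if_pos (by omega), if_pos hlt]
          · rw [if_neg (by omega), if_neg hlt]
      have h2 : g = Function.update g jf (v jf) := by
        have : g jf = v jf := by simp [hg, hjf]
        rw [← this, Function.update_eq_self]
      have hdiff : lnProd (Function.update g jf (x jf)) - lnProd (Function.update g jf (v jf)) ∈ I := by
        rw [← lnProd_update_sub]
        exact hI _ jf (by rw [Function.update_self]; exact h jf)
      have := I.add_mem hdiff (ih (by omega))
      rw [← h2] at this
      rw [h1]
      have heq : lnProd (Function.update g jf (x jf)) - lnProd v
          = (lnProd (Function.update g jf (x jf)) - lnProd g) + (lnProd g - lnProd v) := by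
        abel
      rw [heq]
      exact this
  have := key n le_rfl
  have hx : (fun i : Fin n => if (i : ℕ) < n then x i else v i) = x := by
    funext i; rw [if_pos i.isLt]
  rwa [hx] at this

/-- fiber count of `f` over `i`. -/
def cnt {n m : ℕ} (f : Fin m → Fin n) (i : Fin n) : ℕ := ∑ t, if f t = i then 1 else 0

lemma sum_cnt {n m : ℕ} (f : Fin m → Fin n) : ∑ i, cnt f i = m := by
  unfold cnt
  rw [Finset.sum_comm]
  simp [Finset.sum_ite_eq]

lemma pow_leib {n : ℕ} (d : A →ₗ[F] A) (hd : IsLeftLeibnizDer F n d) (m : ℕ) (x : Fin n → A) :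
    (d ^ m) (lnProd x) = ∑ f : Fin m → Fin n, lnProd fun i => (d ^ cnt f i) (x i) := by
  induction m generalizing x with
  | zero =>
    simp only [pow_zero, Module.End.one_apply]
    rw [Finset.univ_unique, Finset.sum_singleton]
    congr 1
  | succ m ih =>
    rw [pow_succ, Module.End.mul_apply, hd x, map_sum]
    have step : ∀ j : Fin n, (d ^ m) (lnProd (Function.update x j (d (x j))))
        = ∑ f : Fin m → Fin n, lnProd fun i => (d ^ (cnt f i + if j = i then 1 else 0)) (x i) := by
      intro j
      rw [ih]
      refine Finset.sum_congr rfl fun f _ => ?_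
      congr 1
      funext i
      rcases eq_or_ne i j with rfl | hne
      · rw [Function.update_self, if_pos rfl, pow_succ, Module.End.mul_apply]
      · rw [Function.update_of_ne hne, if_neg (Ne.symm hne), add_zero]
    simp only [step]
    rw [← Equiv.sum_comp (Fin.consEquiv (fun _ : Fin (m+1) => Fin n))
      (fun g : Fin (m+1) → Fin n => lnProd fun i => (d ^ cnt g i) (x i)),
      Fintype.sum_prod_type]
    refine Finset.sum_congr rfl fun j _ => Finset.sum_congr rfl fun f _ => ?_
    congr 1
    funext i
    congr 2
    show cnt f i + _ = cnt (Fin.cons (α := fun _ => Fin n) j f) i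
    unfold cnt
    rw [Fin.sum_univ_succ]
    simp only [Fin.cons_zero, Fin.cons_succ]
    rw [add_comm]


variable {n : ℕ} (hn : 2 ≤ n) (d : A →ₗ[F] A) (hd : IsLeftLeibnizDer F n d)
  (I : Submodule F A) (hI : ∀ (x : Fin n → A) (i : Fin n), x i ∈ I → lnProd x ∈ I)

include hn hd hI in
lemma derC : ∀ k s : ℕ, s < n ^ k → ∀ z ∈ derivedN F n I k, (d ^ s) z ∈ I := by
  intro k
  induction k with
  | zero =>
    intro s hs z hz
    rw [pow_zero] at hs
    have : s = 0 := by omega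
    subst this
    simpa [derivedN] using hz
  | succ k ih =>
    intro s hs
    have hle : derivedN F n I (k + 1) ≤ I.comap (d ^ s) := by
      show nProd F n (derivedN F n I k) ≤ _
      rw [nProd, Submodule.span_le]
      rintro z ⟨w, hw, rfl⟩
      show (d ^ s) (lnProd w) ∈ I
      rw [pow_leib d hd]
      refine Submodule.sum_mem _ fun f _ => ?_
      have hex : ∃ i, cnt f i < n ^ k := by
        by_contra hc
        push_neg at hc
        have : n ^ (k + 1) ≤ s := by
          calc n ^ (k + 1) = ∑ _i : Fin n, n ^ k := by
                rw [Finset.sum_const, Finset.card_univ, Fintype.card_fin, smul_eq_mul,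
                  pow_succ, mul_comm]
            _ ≤ ∑ i, cnt f i := Finset.sum_le_sum fun i _ => hc i
            _ = s := sum_cnt f
        omega
      obtain ⟨i₀, hi₀⟩ := hex
      exact hI _ i₀ (ih _ hi₀ _ (hw i₀))
    intro z hz
    exact hle hz

include hn hd hI in
lemma keyStep [CharZero F] (k : ℕ) (w : Fin n → A) (hw : ∀ i, w i ∈ derivedN F n I k) :
    lnProd (fun i => (d ^ n ^ k) (w i)) ∈
      I ⊔ (derivedN F n I (k + 1)).map (d ^ n ^ (k + 1)) := by
  set N := n ^ k with hN
  set m := n ^ (k + 1) with hm'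
  have hm : m = N * n := by rw [hm', hN, pow_succ]
  have hNpos : 0 < N := pow_pos (by omega : 0 < n) k
  classical
  set L : A := lnProd (fun i => (d ^ N) (w i)) with hL
  have expand := pow_leib d hd m w
  set P : (Fin m → Fin n) → Prop := fun f => ∀ i, cnt f i = N with hP
  rw [← Finset.sum_filter_add_sum_filter_not Finset.univ P] at expand
  -- good sum
  have hgood : ∑ f ∈ Finset.filter P Finset.univ, (lnProd fun i => (d ^ cnt f i) (w i))
      = (Finset.filter P Finset.univ).card • L := by
    rw [Finset.sum_congr rfl (fun f hf => ?_), Finset.sum_const]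
    have hf' : P f := (Finset.mem_filter.1 hf).2
    rw [hL]
    congr 1
    funext i
    rw [hf' i]
  -- bad sum in I
  have hbad : ∑ f ∈ Finset.filter (fun f => ¬ P f) Finset.univ,
      (lnProd fun i => (d ^ cnt f i) (w i)) ∈ I := by
    refine Submodule.sum_mem _ fun f hf => ?_
    have hnP : ¬ P f := (Finset.mem_filter.1 hf).2
    have hex : ∃ i, cnt f i < N := by
      by_contra hc
      push_neg at hc
      refine hnP fun i => ?_
      have hsum : ∑ _i : Fin n, (N : ℕ) = ∑ i, cnt f i := by
        rw [sum_cnt f, Finset.sum_const, Finset.card_univ, Fintype.card_fin, smul_eq_mul,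
          hm, mul_comm]
      exact ((Finset.sum_eq_sum_iff_of_le fun i _ => hc i).1 hsum i (Finset.mem_univ i)).symm
    obtain ⟨i₀, hi₀⟩ := hex
    exact hI _ i₀ (derC hn d hd I hI k _ hi₀ _ (hw i₀))
  -- good set nonempty
  have hmem : lnProd w ∈ derivedN F n I (k + 1) := by
    show lnProd w ∈ nProd F n (derivedN F n I k)
    exact Submodule.subset_span ⟨w, hw, rfl⟩
  have hf₀ : ∃ f₀, f₀ ∈ Finset.filter P Finset.univ := by
    set e : Fin N × Fin n ≃ Fin m := finProdFinEquiv.trans (finCongr hm.symm) with he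
    refine ⟨fun t => (e.symm t).2, Finset.mem_filter.2 ⟨Finset.mem_univ _, fun i => ?_⟩⟩
    show (∑ t : Fin m, if (e.symm t).2 = i then 1 else 0) = N
    rw [← Equiv.sum_comp e (fun t : Fin m => if (e.symm t).2 = i then 1 else 0)]
    simp only [Equiv.symm_apply_apply]
    rw [Fintype.sum_prod_type]
    simp [Finset.sum_ite_eq']
  obtain ⟨f₀, hf₀⟩ := hf₀
  set c : ℕ := (Finset.filter P Finset.univ).card with hc
  have hcne : (c : F) ≠ 0 := Nat.cast_ne_zero.2 (Finset.card_ne_zero_of_mem hf₀)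
  -- assemble
  have hsmul : (c : F) • L = (d ^ m) (lnProd w) -
      ∑ f ∈ Finset.filter (fun f => ¬ P f) Finset.univ, (lnProd fun i => (d ^ cnt f i) (w i)) := by
    rw [Nat.cast_smul_eq_nsmul, ← hc] at *
    rw [hgood] at expand
    exact eq_sub_of_add_eq expand.symm
  have hLmem : (c : F) • L ∈ I ⊔ (derivedN F n I (k + 1)).map (d ^ n ^ (k + 1)) := by
    rw [hsmul]
    exact sub_mem (Submodule.mem_sup_right (Submodule.mem_map_of_mem hmem))
      (Submodule.mem_sup_left hbad)
  have hfin : L = (c : F)⁻¹ • ((c : F) • L) := (inv_smul_smul₀ hcne L).symm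
  rw [hfin]
  exact Submodule.smul_mem _ _ hLmem

include hn hd hI in
lemma auxMain [CharZero F] : ∀ k : ℕ,
    derivedN F n (I.map d) k ≤ I ⊔ (derivedN F n I k).map (d ^ n ^ k) := by
  intro k
  induction k with
  | zero =>
    show I.map d ≤ I ⊔ I.map (d ^ n ^ 0)
    rw [pow_zero, pow_one]
    exact le_sup_right
  | succ k ih =>
    show nProd F n (derivedN F n (I.map d) k) ≤ _
    rw [nProd, Submodule.span_le]
    rintro z ⟨x, hx, rfl⟩
    have hdec : ∀ i, ∃ u ∈ I, ∃ w ∈ derivedN F n I k, x i = u + (d ^ n ^ k) w := by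
      intro i
      have hxi := ih (hx i)
      rw [Submodule.mem_sup] at hxi
      obtain ⟨u, hu, v, hv, huv⟩ := hxi
      rw [Submodule.mem_map] at hv
      obtain ⟨w, hw, rfl⟩ := hv
      exact ⟨u, hu, w, hw, huv.symm⟩
    choose u hu w hw hx' using hdec
    have hdiff : lnProd x - lnProd (fun i => (d ^ n ^ k) (w i)) ∈ I := by
      refine lnProd_sub_mem I hI _ _ fun i => ?_
      rw [hx' i, add_sub_cancel_right]
      exact hu i
    have hmain := keyStep hn d hd I hI k w hw
    have : lnProd x = (lnProd x - lnProd (fun i => (d ^ n ^ k) (w i)))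
        + lnProd (fun i => (d ^ n ^ k) (w i)) := by abel
    rw [this]
    exact add_mem (Submodule.mem_sup_left hdiff) hmain

end Main

/-- if `I` is an ideal for the `n`-ary left-normed product and `d` is a left
Leibniz-derivation of order `n`, then `d(I)^{(k)ₙ} ⊆ I + d^{nᵏ}(I^{(k)ₙ})` for all `k ≥ 1`. -/
theorem stmt18 {F A : Type*} [Field F] [CharZero F] [NonUnitalNonAssocRing A] [Module F A]
    {n : ℕ} (hn : 2 ≤ n) (d : A →ₗ[F] A) (hd : IsLeftLeibnizDer F n d)
    (I : Submodule F A)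
    (hI : ∀ (x : Fin n → A) (i : Fin n), x i ∈ I → lnProd x ∈ I) :
    ∀ k : ℕ, 1 ≤ k →
      derivedN F n (I.map d) k ≤ I ⊔ (derivedN F n I k).map (d ^ (n ^ k)) := by
  intro k _
  exact auxMain hn d hd I hI k
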